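/- Let A be an N×N reaction matrix whose associated directed graph (edge j → i iff a_{ij} > 0) is strongly connected, and let u_{1,∞},...,u_{N,∞} > 0. Then there exists ξ > 0 such that for all w ∈ ℝ^N: ∑_{1 ≤ i < j ≤ N} (a_{ij} u_{j,∞} + a_{ji} u_{i,∞}) (w_i/u_{i,∞} - w_j/u_{j,∞})² ≥ ξ ∑_{1 ≤ i < j ≤ N} (w_i/u_{i,∞} - w_j/u_{j,∞})². -/

import Mathlib

open Finset

private def offP (N : ℕ) (v : Fin N → ℝ) : ℝ :=
  ∑ i, ∑ j ∈ Finset.univ.filter (fun j => i < j), (v i - v j) ^ 2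

private def offQ (N : ℕ) (c : Fin N → Fin N → ℝ) (v : Fin N → ℝ) : ℝ :=
  ∑ i, ∑ j ∈ Finset.univ.filter (fun j => i < j), c i j * (v i - v j) ^ 2

private lemma offP_nonneg (N : ℕ) (v : Fin N → ℝ) : 0 ≤ offP N v :=
  Finset.sum_nonneg fun _ _ => Finset.sum_nonneg fun _ _ => sq_nonneg _

private lemma offQ_nonneg (N : ℕ) (c : Fin N → Fin N → ℝ)
    (hc : ∀ i j : Fin N, i < j → 0 ≤ c i j) (v : Fin N → ℝ) : 0 ≤ offQ N c v :=
  Finset.sum_nonneg fun _ _ => Finset.sum_nonneg fun j hj =>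
    mul_nonneg (hc _ j (Finset.mem_filter.mp hj).2) (sq_nonneg _)

private lemma offP_smul (N : ℕ) (t : ℝ) (v : Fin N → ℝ) :
    offP N (fun i => t * v i) = t ^ 2 * offP N v := by
  unfold offP
  rw [Finset.mul_sum]
  refine Finset.sum_congr rfl fun i _ => ?_
  rw [Finset.mul_sum]
  exact Finset.sum_congr rfl fun j _ => by ring

private lemma offQ_smul (N : ℕ) (c : Fin N → Fin N → ℝ) (t : ℝ) (v : Fin N → ℝ) :
    offQ N c (fun i => t * v i) = t ^ 2 * offQ N c v := by
  unfold offQ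
  rw [Finset.mul_sum]
  refine Finset.sum_congr rfl fun i _ => ?_
  rw [Finset.mul_sum]
  exact Finset.sum_congr rfl fun j _ => by ring

private lemma offP_sub_const (N : ℕ) (a : ℝ) (v : Fin N → ℝ) :
    offP N (fun i => v i - a) = offP N v := by
  unfold offP
  refine Finset.sum_congr rfl fun i _ => Finset.sum_congr rfl fun j _ => by ring

private lemma offQ_sub_const (N : ℕ) (c : Fin N → Fin N → ℝ) (a : ℝ) (v : Fin N → ℝ) :
    offQ N c (fun i => v i - a) = offQ N c v := by
  unfold offQ
  refine Finset.sum_congr rfl fun i _ => Finset.sum_congr rfl fun j _ => by ring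

private lemma offP_continuous (N : ℕ) : Continuous (offP N) := by
  unfold offP
  apply continuous_finset_sum
  intro i _
  apply continuous_finset_sum
  intro j _
  fun_prop

private lemma offQ_continuous (N : ℕ) (c : Fin N → Fin N → ℝ) : Continuous (offQ N c) := by
  unfold offQ
  apply continuous_finset_sum
  intro i _
  apply continuous_finset_sum
  intro j _
  fun_prop

private lemma term_le_offP (N : ℕ) (v : Fin N → ℝ) {i j : Fin N} (hij : i < j) :
    (v i - v j) ^ 2 ≤ offP N v := by
  unfold offP
  calc (v i - v j) ^ 2
      ≤ ∑ j' ∈ Finset.univ.filter (fun j' => i < j'), (v i - v j') ^ 2 :=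
        Finset.single_le_sum (f := fun j' => (v i - v j') ^ 2) (fun _ _ => sq_nonneg _)
          (Finset.mem_filter.mpr ⟨Finset.mem_univ _, hij⟩)
    _ ≤ ∑ i', ∑ j' ∈ Finset.univ.filter (fun j' => i' < j'), (v i' - v j') ^ 2 :=
        Finset.single_le_sum
          (f := fun i' => ∑ j' ∈ Finset.univ.filter (fun j' => i' < j'), (v i' - v j') ^ 2)
          (fun _ _ => Finset.sum_nonneg fun _ _ => sq_nonneg _) (Finset.mem_univ i)

theorem dissipation_dominates_all_pairs_of_strongly_connected
    (N : ℕ) (A : Matrix (Fin N) (Fin N) ℝ)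
    (hoff : ∀ i j, i ≠ j → 0 ≤ A i j)
    (hcol : ∀ j, ∑ i, A i j = 0)
    (hconn : ∀ u v : Fin N, Relation.ReflTransGen (fun x y => x ≠ y ∧ 0 < A y x) u v)
    (uinf : Fin N → ℝ) (huinf : ∀ i, 0 < uinf i) :
    ∃ ξ > 0, ∀ w : Fin N → ℝ,
      ∑ i, ∑ j ∈ Finset.univ.filter (fun j => i < j),
          (A i j * uinf j + A j i * uinf i) * (w i / uinf i - w j / uinf j) ^ 2 ≥
        ξ * ∑ i, ∑ j ∈ Finset.univ.filter (fun j => i < j),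
          (w i / uinf i - w j / uinf j) ^ 2 := by
  rcases Nat.lt_or_ge N 2 with hN | hN
  · -- trivial case N ≤ 1 : there are no pairs i < j
    refine ⟨1, one_pos, fun w => ?_⟩
    have hzero : ∀ f : Fin N → Fin N → ℝ,
        ∑ i, ∑ j ∈ Finset.univ.filter (fun j => i < j), f i j = 0 := by
      intro f
      refine Finset.sum_eq_zero fun i _ => Finset.sum_eq_zero fun j hj => ?_
      exfalso
      have hj2 := (Finset.mem_filter.mp hj).2
      rw [Fin.lt_def] at hj2
      have := j.isLt
      omega
    rw [hzero, hzero, mul_zero]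
  · haveI : NeZero N := ⟨by omega⟩
    have h01 : (0 : Fin N) < 1 := by
      have hv1 : ((1 : Fin N) : ℕ) = 1 % N := Fin.val_one' N
      have hv0 : ((0 : Fin N) : ℕ) = 0 := by simp
      rw [Fin.lt_def, hv0, hv1]
      have : 1 % N = 1 := Nat.mod_eq_of_lt (by omega)
      omega
    set c : Fin N → Fin N → ℝ := fun i j => A i j * uinf j + A j i * uinf i with hc_def
    have hc_nonneg : ∀ i j : Fin N, i < j → 0 ≤ c i j := fun i j hij =>
      add_nonneg (mul_nonneg (hoff i j (ne_of_lt hij)) (huinf j).le)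
        (mul_nonneg (hoff j i (ne_of_gt hij)) (huinf i).le)
    -- constancy from Q = 0
    have hconst : ∀ v : Fin N → ℝ, offQ N c v = 0 → ∀ x y : Fin N, v x = v y := by
      intro v hQ x y
      have hterm : ∀ p q : Fin N, p < q → c p q * (v p - v q) ^ 2 = 0 := by
        intro p q hpq
        have hinner :
            ∀ i ∈ (Finset.univ : Finset (Fin N)),
              ∑ j ∈ Finset.univ.filter (fun j => i < j), c i j * (v i - v j) ^ 2 = 0 := by
          rw [← Finset.sum_eq_zero_iff_of_nonneg]
          · exact hQ
          · exact fun i _ => Finset.sum_nonneg fun j hj =>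
              mul_nonneg (hc_nonneg i j (Finset.mem_filter.mp hj).2) (sq_nonneg _)
        have h1 := hinner p (Finset.mem_univ p)
        have h2 :
            ∀ j ∈ Finset.univ.filter (fun j => p < j), c p j * (v p - v j) ^ 2 = 0 := by
          rw [← Finset.sum_eq_zero_iff_of_nonneg]
          · exact h1
          · exact fun j hj =>
              mul_nonneg (hc_nonneg p j (Finset.mem_filter.mp hj).2) (sq_nonneg _)
        exact h2 q (Finset.mem_filter.mpr ⟨Finset.mem_univ q, hpq⟩)
      have hstep : ∀ a b : Fin N, (a ≠ b ∧ 0 < A b a) → v a = v b := by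
        rintro a b ⟨hab, hA⟩
        rcases lt_or_gt_of_ne hab with h | h
        · have hcpos : 0 < c a b :=
            add_pos_of_nonneg_of_pos
              (mul_nonneg (hoff a b hab) (huinf b).le) (mul_pos hA (huinf a))
          have := hterm a b h
          have hsq : (v a - v b) ^ 2 = 0 := by
            rcases mul_eq_zero.mp this with h' | h'
            · exact absurd h' (ne_of_gt hcpos)
            · exact h'
          have := pow_eq_zero_iff (n := 2) (by norm_num) |>.mp hsq
          linarith [sub_eq_zero.mp this]
        · have hcpos : 0 < c b a :=
            add_pos_of_pos_of_nonneg (mul_pos hA (huinf a))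
              (mul_nonneg (hoff a b hab) (huinf b).le)
          have := hterm b a h
          have hsq : (v b - v a) ^ 2 = 0 := by
            rcases mul_eq_zero.mp this with h' | h'
            · exact absurd h' (ne_of_gt hcpos)
            · exact h'
          have := pow_eq_zero_iff (n := 2) (by norm_num) |>.mp hsq
          linarith [sub_eq_zero.mp this]
      have h := hconn x y
      induction h with
      | refl => rfl
      | tail _ hbc ih => exact ih.trans (hstep _ _ hbc)
    -- the compact set K
    set K : Set (Fin N → ℝ) := {v | (∑ i, v i) = 0 ∧ offP N v = 1} with hK_def
    have hclosed : IsClosed K := by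
      have : K = {v : Fin N → ℝ | (∑ i, v i) = 0} ∩ {v | offP N v = 1} := rfl
      rw [this]
      exact (isClosed_eq (by fun_prop) continuous_const).inter
        (isClosed_eq (offP_continuous N) continuous_const)
    have habs : ∀ v ∈ K, ∀ i j : Fin N, |v i - v j| ≤ 1 := by
      intro v hv i j
      rcases lt_trichotomy i j with h | h | h
      · have := term_le_offP N v h
        rw [hv.2] at this
        nlinarith [abs_nonneg (v i - v j), sq_abs (v i - v j)]
      · simp [h]
      · have := term_le_offP N v h
        rw [hv.2] at this
        rw [abs_sub_comm]
        nlinarith [abs_nonneg (v j - v i), sq_abs (v j - v i)]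
    have hbdd : Bornology.IsBounded K := by
      refine (Metric.isBounded_closedBall (x := (0 : Fin N → ℝ)) (r := 1)).subset ?_
      intro v hv
      rw [Metric.mem_closedBall, dist_zero_right]
      refine (pi_norm_le_iff_of_nonneg zero_le_one).mpr fun i => ?_
      have hsum : (N : ℝ) * v i = ∑ j, (v i - v j) := by
        rw [Finset.sum_sub_distrib, hv.1, Finset.sum_const, Finset.card_univ,
          Fintype.card_fin, sub_zero, nsmul_eq_mul]
      have h1 : |(N : ℝ) * v i| ≤ N := by
        rw [hsum]
        calc |∑ j, (v i - v j)| ≤ ∑ j, |v i - v j| := Finset.abs_sum_le_sum_abs _ _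
          _ ≤ ∑ _j : Fin N, (1 : ℝ) := Finset.sum_le_sum fun j _ => habs v hv i j
          _ = N := by rw [Finset.sum_const, Finset.card_univ, Fintype.card_fin, nsmul_eq_mul, mul_one]
      rw [abs_mul, Nat.abs_cast] at h1
      have hNpos : (0 : ℝ) < N := by
        have : 0 < N := by omega
        exact_mod_cast this
      calc ‖v i‖ = |v i| := rfl
        _ ≤ 1 := by
          by_contra hcon
          push_neg at hcon
          nlinarith
    have hKcompact : IsCompact K := Metric.isCompact_of_isClosed_isBounded hclosed hbdd
    -- K is nonempty
    have hKne : K.Nonempty := by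
      set v0 : Fin N → ℝ :=
        fun i => (if i = 0 then (1 : ℝ) else 0) + (if i = 1 then (-1 : ℝ) else 0) with hv0
      have hsum0 : ∑ i, v0 i = 0 := by
        rw [hv0]
        rw [Finset.sum_add_distrib, Finset.sum_ite_eq' Finset.univ (0 : Fin N),
          Finset.sum_ite_eq' Finset.univ (1 : Fin N)]
        simp
      have hv00 : v0 0 = 1 := by
        rw [hv0]
        have : (0 : Fin N) ≠ 1 := ne_of_lt h01
        simp [this]
      have hv01 : v0 1 = -1 := by
        rw [hv0]
        have : (1 : Fin N) ≠ 0 := (ne_of_lt h01).symm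
        simp [this]
      have hP0 : 0 < offP N v0 := by
        have := term_le_offP N v0 h01
        rw [hv00, hv01] at this
        nlinarith
      set t : ℝ := (Real.sqrt (offP N v0))⁻¹ with ht
      refine ⟨fun i => t * v0 i, ?_, ?_⟩
      · rw [← Finset.mul_sum, hsum0, mul_zero]
      · rw [offP_smul, ht]
        rw [inv_pow, Real.sq_sqrt hP0.le]
        exact inv_mul_cancel₀ (ne_of_gt hP0)
    -- minimum of Q on K
    obtain ⟨vm, hvmK, hvm⟩ := hKcompact.exists_isMinOn hKne (offQ_continuous N c).continuousOn
    set ξ : ℝ := offQ N c vm with hξ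
    have hξpos : 0 < ξ := by
      rcases lt_or_eq_of_le (offQ_nonneg N c hc_nonneg vm) with h | h
      · exact h
      · exfalso
        have hconstv := hconst vm h.symm
        have hall0 : ∀ i : Fin N, vm i = 0 := by
          intro i
          have heq : ∑ j, vm j = ∑ _j : Fin N, vm i :=
            Finset.sum_congr rfl fun j _ => (hconstv j i)
          rw [hvmK.1, Finset.sum_const, Finset.card_univ, Fintype.card_fin, nsmul_eq_mul] at heq
          have hNpos : (0 : ℝ) < N := by
            have : 0 < N := by omega
            exact_mod_cast this
          exact (mul_eq_zero.mp heq.symm).resolve_left (ne_of_gt hNpos)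
        have : offP N vm = 0 :=
          Finset.sum_eq_zero fun i _ => Finset.sum_eq_zero fun j _ => by
            rw [hall0 i, hall0 j]; ring
        rw [hvmK.2] at this
        norm_num at this
    refine ⟨ξ, hξpos, fun w => ?_⟩
    set v : Fin N → ℝ := fun i => w i / uinf i with hv
    show offQ N c v ≥ ξ * offP N v
    set a : ℝ := (∑ i, v i) / N with ha
    set x : Fin N → ℝ := fun i => v i - a with hx
    have hxsum : ∑ i, x i = 0 := by
      rw [hx]
      simp only
      rw [Finset.sum_sub_distrib, Finset.sum_const, Finset.card_univ, Fintype.card_fin,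
        nsmul_eq_mul, ha]
      have hNpos : (0 : ℝ) < N := by
        have : 0 < N := by omega
        exact_mod_cast this
      field_simp
      ring
    have hQx : offQ N c x = offQ N c v := offQ_sub_const N c a v
    have hPx : offP N x = offP N v := offP_sub_const N a v
    rcases eq_or_lt_of_le (offP_nonneg N x) with h0 | h0
    · rw [← hPx, ← h0, mul_zero]
      rw [← hQx]
      exact offQ_nonneg N c hc_nonneg x
    · set t : ℝ := Real.sqrt (offP N x) with ht
      have htpos : 0 < t := Real.sqrt_pos.mpr h0
      have ht2 : t ^ 2 = offP N x := Real.sq_sqrt h0.le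
      set y : Fin N → ℝ := fun i => t⁻¹ * x i with hy
      have hyK : y ∈ K := by
        constructor
        · rw [hy]
          simp only
          rw [← Finset.mul_sum, hxsum, mul_zero]
        · rw [hy, offP_smul, inv_pow, ht2]
          exact inv_mul_cancel₀ (ne_of_gt h0)
      have hmin : ξ ≤ offQ N c y := hvm hyK
      have hxy : x = fun i => t * y i := by
        funext i
        rw [hy]
        simp only
        rw [← mul_assoc, mul_inv_cancel₀ (ne_of_gt htpos), one_mul]
      have : offQ N c x = t ^ 2 * offQ N c y := by rw [hxy, offQ_smul]
      rw [← hQx, ← hPx, this, ← ht2]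
      have := mul_le_mul_of_nonneg_left hmin (le_of_lt (by positivity : (0:ℝ) < t ^ 2))
      calc t ^ 2 * offQ N c y ≥ t ^ 2 * ξ := this
        _ = ξ * t ^ 2 := mul_comm _ _
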